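/- Gradient flow structure for the Galerkin (finite element) scheme (Theorem 5.2(i)): assume time-independent data ℓ ∈ X' and g_h ∈ X with e(g_h) ∈ Ψ_h, and let (u_h^k, φ_h^k) ∈ (g_h + V_h) × Ψ_h, k = 0, …, N, be the solution of the discrete scheme with initial value φ_h⁰ ∈ Ψ_h. Then for every k = 1, …, N and every ψ_h ∈ Ψ_h, η⟪(φ_h^k − φ_h^{k−1})/τ, ψ_h⟫_Ψ = −(∂E_{h*})(φ_h^k)[ψ_h]. -/
import Mathlib

set_option maxHeartbeats 1000000


open scoped RealInnerProductSpace

lemma quad_expand_aux {Ψ : Type*} [NormedAddCommGroup Ψ] [InnerProductSpace ℝ Ψ]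
    (C : Ψ →L[ℝ] Ψ) (hCsym : ∀ φ ψ : Ψ, ⟪C φ, ψ⟫ = ⟪φ, C ψ⟫) (a δ : Ψ) :
    ⟪C (a - δ), a - δ⟫ = ⟪C a, a⟫ - 2 * ⟪C a, δ⟫ + ⟪C δ, δ⟫ := by
  have hsym : ⟪C δ, a⟫ = ⟪C a, δ⟫ := by rw [hCsym]; exact real_inner_comm _ _
  rw [map_sub, inner_sub_left, inner_sub_right, inner_sub_right, hsym]; ring

/-- Gradient flow structure for the Galerkin (finite element) scheme
(Theorem 5.2(i)): for time-independent data, the solution of the discrete scheme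
satisfies `η⟪(φ_hᵏ − φ_hᵏ⁻¹)/τ, ψ_h⟫ = −(∂E_{h*})(φ_hᵏ)[ψ_h]` for `k = 1, …, N`
and all `ψ_h ∈ Ψ_h`. -/
theorem stmt_13
    {X Ψ : Type*}
    [NormedAddCommGroup X] [InnerProductSpace ℝ X] [CompleteSpace X]
    [NormedAddCommGroup Ψ] [InnerProductSpace ℝ Ψ] [CompleteSpace Ψ]
    (V : Submodule ℝ X) (hV : IsClosed (V : Set X))
    (e : X →L[ℝ] Ψ) (C : Ψ →L[ℝ] Ψ)
    (hCsym : ∀ φ ψ : Ψ, ⟪C φ, ψ⟫ = ⟪φ, C ψ⟫)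
    (cstar : ℝ) (hcstar : 0 < cstar)
    (hCcoer : ∀ ψ : Ψ, cstar * ‖ψ‖ ^ 2 ≤ ⟪C ψ, ψ⟫)
    (c₀ : ℝ) (hc₀ : 0 < c₀)
    (hacoer : ∀ v ∈ V, c₀ * ‖v‖ ^ 2 ≤ ⟪C (e v), e v⟫)
    (η α : ℝ) (hη : 0 < η) (hα : 0 ≤ α)
    (Vh : Submodule ℝ X) (hVhV : Vh ≤ V) (hVh : IsClosed (Vh : Set X))
    (Ψh : Submodule ℝ Ψ) (hΨh : IsClosed (Ψh : Set Ψ))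
    (he_h : ∀ v ∈ Vh, e v ∈ Ψh)
    (hC_h : ∀ ψ ∈ Ψh, C ψ ∈ Ψh)
    (τ : ℝ) (hτ : 0 < τ) (N : ℕ)
    (ℓ : X →L[ℝ] ℝ) (gh : X) (hgh : e gh ∈ Ψh)
    (E : X → Ψ → ℝ)
    (hE : ∀ u φ, E u φ =
      (1 / 2) * ⟪C (e u - φ), e u - φ⟫ + (α / 2) * ‖φ‖ ^ 2 - ℓ u)
    (ubarh : Ψ → X)
    (hubarh_mem : ∀ ψ : Ψ, ubarh ψ - gh ∈ Vh)
    (hubarh_weak : ∀ ψ : Ψ, ∀ v ∈ Vh, ⟪C (e (ubarh ψ) - ψ), e v⟫ = ℓ v)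
    (hubarh_min : ∀ ψ : Ψ, ∀ v : X, v - gh ∈ Vh → E (ubarh ψ) ψ ≤ E v ψ)
    (Ehstar : Ψ → ℝ)
    (hEhstar : ∀ ψ : Ψ, Ehstar ψ = E (ubarh ψ) ψ)
    (u : ℕ → X) (φ : ℕ → Ψ) (φ0 : Ψ) (hφ0mem : φ0 ∈ Ψh)
    (hφ0 : φ 0 = φ0)
    (hmem : ∀ k ≤ N, u k - gh ∈ Vh)
    (hφmem : ∀ k ≤ N, φ k ∈ Ψh)
    (heq1 : ∀ k ≤ N, ∀ v ∈ Vh, ⟪C (e (u k) - φ k), e v⟫ = ℓ v)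
    (heq2 : ∀ k, 1 ≤ k → k ≤ N →
      (η / τ) • (φ k - φ (k - 1)) + α • φ k - C (e (u k) - φ k) = 0) :
    ∀ k, 1 ≤ k → k ≤ N → ∀ ψh ∈ Ψh,
      HasDerivAt (fun ε : ℝ => Ehstar (φ k + ε • ψh))
        (-(η * ⟪τ⁻¹ • (φ k - φ (k - 1)), ψh⟫)) 0 := by
  intro k hk1 hkN ψh hψh
  -- Expansion of the energy
  have hexp : ∀ (u' : X) (χ δ : Ψ), E u' (χ + δ) =
      E u' χ + ⟪α • χ - C (e u' - χ), δ⟫ + (1/2) * ⟪C δ, δ⟫ + (α/2) * ‖δ‖^2 := by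
    intro u' χ δ
    have hns : ‖χ + δ‖^2 = ‖χ‖^2 + 2*⟪χ,δ⟫ + ‖δ‖^2 := norm_add_sq_real χ δ
    have hrw : e u' - (χ + δ) = (e u' - χ) - δ := by abel
    rw [hE, hE, hrw, quad_expand_aux C hCsym, hns, inner_sub_left, real_inner_smul_left]
    ring
  -- uniqueness: `ubarh (φ k) = u k`
  have huk : ubarh (φ k) = u k := by
    have hw : u k - ubarh (φ k) ∈ Vh := by
      have := sub_mem (hmem k hkN) (hubarh_mem (φ k))
      simpa [sub_sub_sub_cancel_right] using this
    have hid : C (e (u k - ubarh (φ k))) =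
        C (e (u k) - φ k) - C (e (ubarh (φ k)) - φ k) := by
      rw [← map_sub]; congr 1; rw [map_sub]; abel
    have hzero : ⟪C (e (u k - ubarh (φ k))), e (u k - ubarh (φ k))⟫ = 0 := by
      rw [hid, inner_sub_left, heq1 k hkN _ hw, hubarh_weak (φ k) _ hw, sub_self]
    have hco := hacoer _ (hVhV hw)
    have hco2 : c₀ * ‖u k - ubarh (φ k)‖ ^ 2 ≤ 0 := le_of_le_of_eq hco hzero
    have : u k - ubarh (φ k) = 0 := by
      by_contra hne
      have hpos : 0 < ‖u k - ubarh (φ k)‖ := norm_pos_iff.mpr hne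
      nlinarith [mul_pos hc₀ (mul_pos hpos hpos), hco2]
    exact (sub_eq_zero.mp this).symm
  -- Lipschitz estimate for the minimizer
  have hlip : ∀ δ : Ψ, ‖ubarh (φ k + δ) - ubarh (φ k)‖ ≤ (‖C‖*‖e‖/c₀) * ‖δ‖ := by
    intro δ
    set w := ubarh (φ k + δ) - ubarh (φ k) with hwdef
    have hwVh : w ∈ Vh := by
      have := sub_mem (hubarh_mem (φ k + δ)) (hubarh_mem (φ k))
      simpa [hwdef, sub_sub_sub_cancel_right] using this
    have hid : C (e w) =
        C (e (ubarh (φ k + δ)) - (φ k + δ)) - C (e (ubarh (φ k)) - φ k) + C δ := by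
      rw [← map_sub, ← map_add]; congr 1; rw [hwdef, map_sub]; abel
    have h3 : ⟪C (e w), e w⟫ = ⟪C δ, e w⟫ := by
      rw [hid, inner_add_left, inner_sub_left, hubarh_weak (φ k + δ) _ hwVh,
        hubarh_weak (φ k) _ hwVh]; ring
    have h4 : c₀ * ‖w‖^2 ≤ ‖C‖ * ‖e‖ * ‖δ‖ * ‖w‖ := by
      calc c₀ * ‖w‖^2 ≤ ⟪C (e w), e w⟫ := hacoer _ (hVhV hwVh)
        _ = ⟪C δ, e w⟫ := h3
        _ ≤ ‖C δ‖ * ‖e w‖ := real_inner_le_norm _ _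
        _ ≤ (‖C‖*‖δ‖) * (‖e‖*‖w‖) :=
            mul_le_mul (C.le_opNorm δ) (e.le_opNorm w) (norm_nonneg _) (by positivity)
        _ = ‖C‖ * ‖e‖ * ‖δ‖ * ‖w‖ := by ring
    rcases eq_or_lt_of_le (norm_nonneg w) with h0 | h0
    · rw [← h0]; positivity
    · have h9 : (c₀*‖w‖) * ‖w‖ ≤ (‖C‖*‖e‖*‖δ‖) * ‖w‖ := by nlinarith
      have h10 : c₀*‖w‖ ≤ ‖C‖*‖e‖*‖δ‖ := le_of_mul_le_mul_right h9 h0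
      have h11 : ‖w‖ ≤ (‖C‖*‖e‖*‖δ‖)/c₀ := (le_div_iff₀ hc₀).mpr (by linarith)
      have h12 : (‖C‖*‖e‖*‖δ‖)/c₀ = ‖C‖*‖e‖/c₀*‖δ‖ := by ring
      linarith
  -- gradient candidate
  set gk : Ψ := α • φ k - C (e (ubarh (φ k)) - φ k) with hgkdef
  have hCbd : ∀ δ : Ψ, ⟪C δ, δ⟫ ≤ ‖C‖ * ‖δ‖^2 := by
    intro δ
    calc ⟪C δ, δ⟫ ≤ ‖C δ‖ * ‖δ‖ := real_inner_le_norm _ _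
      _ ≤ (‖C‖*‖δ‖) * ‖δ‖ := mul_le_mul_of_nonneg_right (C.le_opNorm δ) (norm_nonneg δ)
      _ = ‖C‖ * ‖δ‖^2 := by ring
  set L : ℝ := (‖C‖*‖e‖)*(‖C‖*‖e‖/c₀) + ‖C‖ + α with hLdef
  have hupper : ∀ δ : Ψ, Ehstar (φ k + δ) - Ehstar (φ k) - ⟪gk, δ⟫ ≤ ((‖C‖ + α)/2) * ‖δ‖^2 := by
    intro δ
    have h1 : Ehstar (φ k + δ) ≤ E (ubarh (φ k)) (φ k + δ) := by
      rw [hEhstar]; exact hubarh_min _ _ (hubarh_mem _)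
    have h2 := hexp (ubarh (φ k)) (φ k) δ
    have h4 : Ehstar (φ k) = E (ubarh (φ k)) (φ k) := hEhstar _
    have h3 := hCbd δ
    rw [hgkdef]
    linarith
  have hlower : ∀ δ : Ψ,
      -((L + (‖C‖ + α)/2) * ‖δ‖^2) ≤ Ehstar (φ k + δ) - Ehstar (φ k) - ⟪gk, δ⟫ := by
    intro δ
    have h1 : Ehstar (φ k) ≤ E (ubarh (φ k + δ)) (φ k) := by
      rw [hEhstar]; exact hubarh_min _ _ (hubarh_mem _)
    have h2 : E (ubarh (φ k + δ)) (φ k) = E (ubarh (φ k + δ)) ((φ k + δ) + (-δ)) := by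
      rw [add_neg_cancel_right]
    have h3 := hexp (ubarh (φ k + δ)) (φ k + δ) (-δ)
    have h4 : Ehstar (φ k + δ) = E (ubarh (φ k + δ)) (φ k + δ) := hEhstar _
    set g' : Ψ := α • (φ k + δ) - C (e (ubarh (φ k + δ)) - (φ k + δ)) with hg'def
    have h5 : ⟪g', -δ⟫ = -⟪g', δ⟫ := inner_neg_right _ _
    have h6 : ⟪C (-δ), -δ⟫ = ⟪C δ, δ⟫ := by rw [map_neg, inner_neg_neg]
    have h7 : ‖(-δ : Ψ)‖ = ‖δ‖ := norm_neg δ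
    -- ‖g' - gk‖ ≤ L ‖δ‖
    have hd : g' - gk = α • δ + C δ - C (e (ubarh (φ k + δ) - ubarh (φ k))) := by
      rw [hg'def, hgkdef]
      simp only [map_sub, map_add, smul_add]
      abel
    have hgdiff : ‖g' - gk‖ ≤ L * ‖δ‖ := by
      rw [hd]
      have b1 : ‖α • δ‖ = α * ‖δ‖ := by
        rw [norm_smul, Real.norm_eq_abs, abs_of_nonneg hα]
      have b2 : ‖C δ‖ ≤ ‖C‖ * ‖δ‖ := C.le_opNorm δ
      have b3 : ‖C (e (ubarh (φ k + δ) - ubarh (φ k)))‖ ≤ (‖C‖*‖e‖)*(‖C‖*‖e‖/c₀) * ‖δ‖ := by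
        have he0 : (0:ℝ) ≤ ‖e‖ := norm_nonneg _
        have hC0 : (0:ℝ) ≤ ‖C‖ := norm_nonneg _
        calc ‖C (e (ubarh (φ k + δ) - ubarh (φ k)))‖
            ≤ ‖C‖ * ‖e (ubarh (φ k + δ) - ubarh (φ k))‖ := C.le_opNorm _
          _ ≤ ‖C‖ * (‖e‖ * ‖ubarh (φ k + δ) - ubarh (φ k)‖) :=
              mul_le_mul_of_nonneg_left (e.le_opNorm _) hC0
          _ ≤ ‖C‖ * (‖e‖ * ((‖C‖*‖e‖/c₀) * ‖δ‖)) :=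
              mul_le_mul_of_nonneg_left
                (mul_le_mul_of_nonneg_left (hlip δ) he0) hC0
          _ = (‖C‖*‖e‖)*(‖C‖*‖e‖/c₀) * ‖δ‖ := by ring
      calc ‖α • δ + C δ - C (e (ubarh (φ k + δ) - ubarh (φ k)))‖
          ≤ ‖α • δ + C δ‖ + ‖C (e (ubarh (φ k + δ) - ubarh (φ k)))‖ := norm_sub_le _ _
        _ ≤ (‖α • δ‖ + ‖C δ‖) + ‖C (e (ubarh (φ k + δ) - ubarh (φ k)))‖ := by
            have := norm_add_le (α • δ) (C δ); linarith
        _ ≤ L * ‖δ‖ := by rw [hLdef, b1]; nlinarith [b2, b3]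
    have hinn : -(L * ‖δ‖^2) ≤ ⟪g' - gk, δ⟫ := by
      have h8 : |⟪g' - gk, δ⟫| ≤ ‖g' - gk‖ * ‖δ‖ := abs_real_inner_le_norm _ _
      have h9 : ‖g' - gk‖ * ‖δ‖ ≤ (L * ‖δ‖) * ‖δ‖ :=
        mul_le_mul_of_nonneg_right hgdiff (norm_nonneg _)
      have h10 := abs_le.mp h8
      nlinarith [h10.1]
    have hsplit : ⟪g' - gk, δ⟫ = ⟪g', δ⟫ - ⟪gk, δ⟫ := inner_sub_left _ _ _
    have h3' := hCbd δ
    -- combine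
    rw [h2, h3, h5, h6, h7] at h1
    clear_value g' gk L
    linarith
  -- the quadratic bound
  set Kc : ℝ := L + (‖C‖ + α)/2 with hKcdef
  have hbound : ∀ δ : Ψ, |Ehstar (φ k + δ) - Ehstar (φ k) - ⟪gk, δ⟫| ≤ Kc * ‖δ‖^2 := by
    intro δ
    rw [abs_le]
    constructor
    · have := hlower δ; linarith
    · have h := hupper δ
      have hL0 : 0 ≤ L := by rw [hLdef]; positivity
      have h2 : 0 ≤ L * ‖δ‖^2 := mul_nonneg hL0 (sq_nonneg _)
      rw [hKcdef]
      clear_value L gk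
      nlinarith
  -- identify the gradient via the discrete equation
  have hCval : C (e (ubarh (φ k)) - φ k) = (η/τ) • (φ k - φ (k-1)) + α • φ k := by
    rw [huk]
    exact (sub_eq_zero.mp (heq2 k hk1 hkN)).symm
  have hgk : gk = -((η/τ) • (φ k - φ (k-1))) := by
    rw [hgkdef, hCval]; abel
  have hval : ⟪gk, ψh⟫ = -(η * ⟪τ⁻¹ • (φ k - φ (k - 1)), ψh⟫) := by
    rw [hgk, inner_neg_left, real_inner_smul_left, real_inner_smul_left, div_eq_mul_inv]
    ring
  rw [← hval]
  rw [hasDerivAt_iff_isLittleO]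
  have hsq : (fun ε : ℝ => ε^2) =o[nhds (0:ℝ)] (fun ε => ε) := by
    have h := hasDerivAt_pow 2 (0:ℝ)
    rw [hasDerivAt_iff_isLittleO] at h
    simpa using h
  have hbig : (fun ε : ℝ => Ehstar (φ k + ε • ψh) - Ehstar (φ k + (0:ℝ) • ψh)
      - (ε - 0) • ⟪gk, ψh⟫) =O[nhds (0:ℝ)] (fun ε : ℝ => ε^2) := by
    apply Asymptotics.IsBigO.of_bound (Kc * ‖ψh‖^2)
    filter_upwards with ε
    have hb := hbound (ε • ψh)
    have hs : ⟪gk, ε • ψh⟫ = ε * ⟪gk, ψh⟫ := real_inner_smul_right _ _ _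
    have hn : ‖ε • ψh‖^2 = ε^2 * ‖ψh‖^2 := by
      rw [norm_smul, Real.norm_eq_abs, mul_pow, sq_abs]
    rw [hs, hn] at hb
    simp only [zero_smul, add_zero, sub_zero, smul_eq_mul, Real.norm_eq_abs]
    rw [abs_of_nonneg (sq_nonneg ε)]
    calc |Ehstar (φ k + ε • ψh) - Ehstar (φ k) - ε * ⟪gk, ψh⟫|
        ≤ Kc * (ε^2 * ‖ψh‖^2) := hb
      _ = Kc * ‖ψh‖^2 * ε^2 := by ring
  have := hbig.trans_isLittleO hsq
  simpa using this
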